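/- Let M ⊆ P(Σ^ℕ) be compact, transition complete, in-complete and contractive, and let X ⊆ Σ^ℤ be the subshift presented by M. Then X has a g-function g such that for every x⁻ ∈ X⁻, every σ ∈ Γ₁⁺(x⁻), and every choice of μ_k ∈ M with μ_k(C((x_{-k},…,x_0))) > 0 for all k, one has g(x⁻,σ) = lim_{k→∞} τ_{(x_{-k},…,x_0)}(μ_k)(C(σ)). In particular X has property g. -/

import Mathlib

open Set Filter Topology

/-! Basic symbolic dynamics notions.

* The alphabet is a nonempty finite type `A` with the discrete topology; `A^ℤ` and `A^ℕ`
  carry the product topology.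
* A left-infinite sequence `x⁻ = (x_i)_{i ≤ 0}` is encoded as `u : ℕ → A` with `u n = x (-n)`.
* Finite words are lists, read left to right.
-/

/-- The shift `S`. -/
def shiftMap {A : Type*} (x : ℤ → A) : ℤ → A := fun i => x (i + 1)

/-- A subshift: a nonempty closed shift-invariant subset of `A^ℤ`. -/
def IsSubshift {A : Type*} [TopologicalSpace A] (X : Set (ℤ → A)) : Prop :=
  X.Nonempty ∧ IsClosed X ∧ shiftMap '' X = X

/-- `X⁻`: the left-infinite rays of points of `X` (encoded via `u n = x (-n)`). -/
def Xminus {A : Type*} (X : Set (ℤ → A)) : Set (ℕ → A) :=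
  {u | ∃ x ∈ X, ∀ n : ℕ, u n = x (-(n : ℤ))}

/-- The word `w` occurs in `x` (as a block of consecutive coordinates). -/
def Occurs {A : Type*} (w : List A) (x : ℤ → A) : Prop :=
  ∃ i : ℤ, ∀ j : Fin w.length, x (i + ((j : ℕ) : ℤ)) = w.get j

/-- A finite word is admissible for `X` if it occurs in some point of `X`. -/
def Admissible {A : Type*} (X : Set (ℤ → A)) (w : List A) : Prop :=
  ∃ x ∈ X, Occurs w x

/-- The left ray `u` ends in the word `w`, i.e. `(x_{-k},…,x_0) = w` where `|w| = k+1`. -/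
def EndsIn {A : Type*} (u : ℕ → A) (w : List A) : Prop :=
  ∀ j : Fin w.length, u (w.length - 1 - (j : ℕ)) = w.get j

/-- `Γ₁⁺(x⁻)`: the letters that can follow the left ray `u` in `X`. -/
def Gamma1 {A : Type*} (X : Set (ℤ → A)) (u : ℕ → A) : Set A :=
  {σ | ∃ x ∈ X, (∀ n : ℕ, x (-(n : ℤ)) = u n) ∧ x 1 = σ}

/-- `x` carries the word `b` on the coordinate interval `[-(|b| - 1), 0]`. -/
def EndsAtZero {A : Type*} (x : ℤ → A) (b : List A) : Prop :=
  ∀ j : Fin b.length, x (((j : ℕ) : ℤ) - ((b.length : ℤ) - 1)) = b.get j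

/-- `c ∈ ω⁺(b)`: every point of `X` carrying `b` ending at coordinate `0` can be modified
on the positive coordinates so as to continue with the word `c`. -/
def OmegaWord {A : Type*} (X : Set (ℤ → A)) (b c : List A) : Prop :=
  ∀ x ∈ X, EndsAtZero x b →
    ∃ x' ∈ X, (∀ i : ℤ, i ≤ 0 → x' i = x i) ∧
      ∀ j : Fin c.length, x' (((j : ℕ) : ℤ) + 1) = c.get j

/-- `ω₁⁺(b)`. -/
def omega1 {A : Type*} (X : Set (ℤ → A)) (b : List A) : Set A :=
  {σ | OmegaWord X b [σ]}

/-- The word `(x_{-n},…,x_0)` read off the left ray `u`. -/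
def lastWord {A : Type*} (u : ℕ → A) (n : ℕ) : List A :=
  List.ofFn fun j : Fin (n + 1) => u (n - (j : ℕ))

/-- `Δ₁⁺(x⁻) = ⋃ₙ ω₁⁺((x_{-n},…,x_0))`. -/
def Delta1 {A : Type*} (X : Set (ℤ → A)) (u : ℕ → A) : Set A :=
  ⋃ n : ℕ, omega1 X (lastWord u n)

/-- Property g: `Δ₁⁺(x⁻) ≠ ∅` for every `x⁻ ∈ X⁻`. -/
def PropertyG {A : Type*} (X : Set (ℤ → A)) : Prop :=
  ∀ u ∈ Xminus X, (Delta1 X u).Nonempty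

/-- A g-function for `X`, encoded as a total function `g : (ℕ → A) → A → ℝ`:
continuity (of the restriction to the graph of `Γ₁⁺`, i.e. of the map on
`{(x⁻,σ) : σ ∈ Γ₁⁺(x⁻)}`), values in `[0,1]` there, and the normalization
`∑_{σ ∈ Γ₁⁺(x⁻)} g (x⁻, σ) = 1`. -/
def IsGFunction {A : Type*} [Fintype A] [TopologicalSpace A] (X : Set (ℤ → A))
    (g : (ℕ → A) → A → ℝ) : Prop :=
  ContinuousOn (fun p : (ℕ → A) × A => g p.1 p.2)
      {p : (ℕ → A) × A | p.1 ∈ Xminus X ∧ p.2 ∈ Gamma1 X p.1} ∧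
  (∀ u ∈ Xminus X, ∀ σ ∈ Gamma1 X u, g u σ ∈ Set.Icc (0 : ℝ) 1) ∧
  (∀ u ∈ Xminus X, ∑ σ : A, (Gamma1 X u).indicator (g u) σ = 1)

/-- Property (D): for every admissible word `b` and letter `σ` with `bσ` admissible there
is a word `a` with `ab` admissible and `σ ∈ ω₁⁺(ab)`. -/
def PropertyD {A : Type*} (X : Set (ℤ → A)) : Prop :=
  ∀ (b : List A) (σ : A), b ≠ [] → Admissible X (b ++ [σ]) →
    ∃ a : List A, a ≠ [] ∧ Admissible X (a ++ b) ∧ σ ∈ omega1 X (a ++ b)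

/-! Borel probability measures on `A^ℕ` are encoded by their values on cylinder sets:
a measure is recorded as the function `μ : List A → ℝ` with `μ w = μ(C(w))` (this is a
canonical bijection, by the Kolmogorov extension theorem).  Under this encoding the
topology of weak convergence corresponds to the topology of pointwise convergence of the
cylinder values, i.e. to the subspace topology inherited from the product topology on
`List A → ℝ`. -/

/-- `μ : List A → ℝ` represents a Borel probability measure on `A^ℕ` via its cylinder
values. -/
def IsCylMeasure {A : Type*} [Fintype A] (μ : List A → ℝ) : Prop :=
  μ [] = 1 ∧ (∀ w, 0 ≤ μ w) ∧ ∀ w : List A, μ w = ∑ σ : A, μ (w ++ [σ])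

/-- The conditional measure `τ_w(μ)` of `μ` given the cylinder `C(w)`:
`τ_w(μ)(C(v)) = μ(C(wv))/μ(C(w))`. -/
noncomputable def tauWord {A : Type*} (w : List A) (μ : List A → ℝ) : List A → ℝ :=
  fun v => μ (w ++ v) / μ w

/-- `M` is transition complete. -/
def TransitionComplete {A : Type*} (M : Set (List A → ℝ)) : Prop :=
  ∀ μ ∈ M, ∀ σ : A, 0 < μ [σ] → tauWord [σ] μ ∈ M

/-- `M` is in-complete: every `μ ∈ M` has a predecessor. -/
def InComplete {A : Type*} (M : Set (List A → ℝ)) : Prop :=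
  ∀ μ ∈ M, ∃ ν ∈ M, ∃ σ : A, 0 < ν [σ] ∧ tauWord [σ] ν = μ

/-- `M` presents `X`: the admissible words of `X` are exactly the finite words with
positive measure for some `μ ∈ M`. -/
def Presents {A : Type*} (M : Set (List A → ℝ)) (X : Set (ℤ → A)) : Prop :=
  ∀ w : List A, Admissible X w ↔ ∃ μ ∈ M, 0 < μ w

/-- Contractivity: for every `x⁻ ∈ X⁻` the diameter of the set
`{τ_{(x_{-k},…,x_0)}(μ) : μ ∈ M, μ(C((x_{-k},…,x_0))) > 0}` tends to `0` as `k → ∞`.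
This is expressed coordinatewise on cylinder values; on the compact metrizable space of
probability measures this is equivalent to convergence of the diameters to `0` with
respect to any fixed compatible metric. -/
def Contractive {A : Type*} (M : Set (List A → ℝ)) (X : Set (ℤ → A)) : Prop :=
  ∀ u ∈ Xminus X, ∀ v : List A, ∀ ε > (0 : ℝ), ∃ K : ℕ, ∀ k ≥ K,
    ∀ μ ∈ M, ∀ ν ∈ M, 0 < μ (lastWord u k) → 0 < ν (lastWord u k) →
      |tauWord (lastWord u k) μ v - tauWord (lastWord u k) ν v| ≤ ε

section Aux

variable {A : Type*}

/-! ### Cylinder measure basics -/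

lemma cyl_step [Fintype A] {μ : List A → ℝ} (h : IsCylMeasure μ) (w : List A) (σ : A) :
    μ (w ++ [σ]) ≤ μ w := by
  rw [h.2.2 w]
  exact Finset.single_le_sum (f := fun τ => μ (w ++ [τ])) (fun i _ => h.2.1 _) (Finset.mem_univ σ)

lemma cyl_mono [Fintype A] {μ : List A → ℝ} (h : IsCylMeasure μ) (w v : List A) :
    μ (w ++ v) ≤ μ w := by
  induction v using List.reverseRecOn with
  | nil => simp
  | append_singleton v σ ih =>
      calc μ (w ++ (v ++ [σ])) = μ ((w ++ v) ++ [σ]) := by rw [List.append_assoc]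
      _ ≤ μ (w ++ v) := cyl_step h _ _
      _ ≤ μ w := ih

lemma tau_nonneg [Fintype A] {μ : List A → ℝ} (h : IsCylMeasure μ) (w v : List A) :
    0 ≤ tauWord w μ v :=
  div_nonneg (h.2.1 _) (h.2.1 _)

lemma tau_le_one [Fintype A] {μ : List A → ℝ} (h : IsCylMeasure μ) (w v : List A)
    (hw : 0 < μ w) : tauWord w μ v ≤ 1 :=
  div_le_one_of_le₀ (cyl_mono h w v) hw.le

lemma tau_sum_one [Fintype A] {μ : List A → ℝ} (h : IsCylMeasure μ) (w : List A)
    (hw : 0 < μ w) : ∑ σ : A, tauWord w μ [σ] = 1 := by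
  unfold tauWord
  rw [← Finset.sum_div, ← h.2.2 w, div_self hw.ne']

/-! ### lastWord basics -/

lemma lastWord_length (u : ℕ → A) (n : ℕ) : (lastWord u n).length = n + 1 := by
  simp [lastWord]

lemma lastWord_getElem (u : ℕ → A) (n : ℕ) (j : ℕ) (h : j < (lastWord u n).length) :
    (lastWord u n)[j] = u (n - j) := by
  simp only [lastWord, List.getElem_ofFn]

lemma lastWord_succ (u : ℕ → A) (n : ℕ) :
    lastWord u (n + 1) = u (n + 1) :: lastWord u n := by
  unfold lastWord
  rw [List.ofFn_succ]
  simp only [Fin.val_zero, Nat.sub_zero, List.cons.injEq, true_and]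
  congr 1
  funext i
  simp [Fin.val_succ, Nat.succ_sub_succ]

lemma lastWord_congr {u v : ℕ → A} {n : ℕ} (h : ∀ m ≤ n, u m = v m) :
    lastWord u n = lastWord v n := by
  unfold lastWord
  congr 1
  funext j
  exact h _ (Nat.sub_le _ _)

end Aux
section Aux2

variable {A : Type*} [Fintype A]

/-- One-step peeling of conditional measures. -/
lemma tau_peel_one {M : Set (List A → ℝ)} (hM : ∀ μ ∈ M, IsCylMeasure μ)
    (htc : TransitionComplete M) {μ : List A → ℝ} (hμ : μ ∈ M) (σ : A) (w : List A)
    (hpos : 0 < μ (σ :: w)) :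
    tauWord [σ] μ ∈ M ∧ 0 < tauWord [σ] μ w ∧
      ∀ v, tauWord (σ :: w) μ v = tauWord w (tauWord [σ] μ) v := by
  have hcyl := hM μ hμ
  have hσ : 0 < μ [σ] := lt_of_lt_of_le hpos (cyl_mono hcyl [σ] w)
  refine ⟨htc μ hμ σ hσ, ?_, ?_⟩
  · exact div_pos hpos hσ
  · intro v
    unfold tauWord
    rw [div_div_div_cancel_right₀ hσ.ne']
    rfl

/-- Multi-step peeling along `lastWord`. -/
lemma tau_peel (M : Set (List A → ℝ)) (hM : ∀ μ ∈ M, IsCylMeasure μ)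
    (htc : TransitionComplete M) (u : ℕ → A) (K : ℕ) :
    ∀ k, K ≤ k → ∀ μ ∈ M, 0 < μ (lastWord u k) →
      ∃ ν ∈ M, 0 < ν (lastWord u K) ∧
        ∀ v, tauWord (lastWord u k) μ v = tauWord (lastWord u K) ν v := by
  intro k hk
  induction k, hk using Nat.le_induction with
  | base => exact fun μ hμ hpos => ⟨μ, hμ, hpos, fun _ => rfl⟩
  | succ k hk ih =>
      intro μ hμ hpos
      rw [lastWord_succ] at hpos
      obtain ⟨hμ', hpos', heq⟩ := tau_peel_one hM htc hμ (u (k+1)) (lastWord u k) hpos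
      obtain ⟨ν, hν, hνpos, hνeq⟩ := ih _ hμ' hpos'
      refine ⟨ν, hν, hνpos, fun v => ?_⟩
      rw [lastWord_succ, heq v, hνeq v]

end Aux2

section Aux3

variable {A : Type*}

lemma shift_translate {X : Set (ℤ → A)} (hinv : shiftMap '' X = X) (m : ℤ) :
    ∀ x ∈ X, (fun i => x (i + m)) ∈ X := by
  have hfwd : ∀ x ∈ X, shiftMap x ∈ X := by
    intro x hx
    have : shiftMap x ∈ shiftMap '' X := ⟨x, hx, rfl⟩
    rwa [hinv] at this
  have hbwd : ∀ x ∈ X, ∃ y ∈ X, shiftMap y = x := by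
    intro x hx
    rw [← hinv] at hx
    obtain ⟨y, hy, hyx⟩ := hx
    exact ⟨y, hy, hyx⟩
  have hinj : Function.Injective (shiftMap (A := A)) := by
    intro y z h
    funext i
    have := congrFun h (i - 1)
    simpa [shiftMap, sub_add_cancel] using this
  induction m using Int.induction_on with
  | zero => intro x hx; simpa using hx
  | succ n ih =>
      intro x hx
      have h1 := hfwd _ (ih x hx)
      have : shiftMap (fun i => x (i + (n : ℤ))) = fun i => x (i + ((n : ℤ) + 1)) := by
        funext i; show x (i + 1 + n) = x (i + (n + 1)); congr 1; ring
      rwa [this] at h1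
  | pred n ih =>
      intro x hx
      have h1 := ih x hx
      obtain ⟨y, hy, hsy⟩ := hbwd _ h1
      have : shiftMap (fun i => x (i + (-(n : ℤ) - 1))) = fun i => x (i + -(n : ℤ)) := by
        funext i; show x (i + 1 + (-(n:ℤ) - 1)) = x (i + -(n:ℤ)); congr 1; ring
      have heq : (fun i => x (i + (-(n : ℤ) - 1))) = y := hinj (by rw [this, hsy])
      rwa [heq]

/-- From an admissible word, produce a point carrying it at any desired position. -/
lemma admissible_translate {X : Set (ℤ → A)} (hinv : shiftMap '' X = X) {w : List A}
    (h : Admissible X w) (t : ℤ) :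
    ∃ y ∈ X, ∀ j : Fin w.length, y (t + ((j : ℕ) : ℤ)) = w.get j := by
  obtain ⟨x, hx, i, hi⟩ := h
  refine ⟨fun s => x (s + (i - t)), shift_translate hinv (i - t) x hx, fun j => ?_⟩
  have : t + ((j : ℕ) : ℤ) + (i - t) = i + ((j : ℕ) : ℤ) := by ring
  show x (t + ((j : ℕ) : ℤ) + (i - t)) = w.get j
  rw [this]
  exact hi j

lemma admissible_lastWord {X : Set (ℤ → A)} {u : ℕ → A} (hu : u ∈ Xminus X) (k : ℕ) :
    Admissible X (lastWord u k) := by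
  obtain ⟨x, hx, hux⟩ := hu
  refine ⟨x, hx, -(k : ℤ), fun j => ?_⟩
  have hj : (j : ℕ) ≤ k :=
    Nat.lt_succ_iff.mp (lt_of_lt_of_le j.isLt (le_of_eq (lastWord_length u k)))
  have h1 : -(k : ℤ) + ((j : ℕ) : ℤ) = -(((k - (j : ℕ) : ℕ)) : ℤ) := by
    push_cast [hj]
    ring
  rw [h1, ← hux (k - (j : ℕ))]
  rw [List.get_eq_getElem, lastWord_getElem]

end Aux3
section Aux4

variable {A : Type*}

lemma point_of_admissible_concat {X : Set (ℤ → A)} (hinv : shiftMap '' X = X)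
    {u : ℕ → A} {σ : A} {k : ℕ} (h : Admissible X (lastWord u k ++ [σ])) :
    ∃ y ∈ X, (∀ n ≤ k, y (-(n : ℤ)) = u n) ∧ y 1 = σ := by
  have hlen : (lastWord u k ++ [σ]).length = k + 2 := by
    simp [lastWord_length]
  obtain ⟨y, hy, hyw⟩ := admissible_translate hinv h (-(k : ℤ))
  refine ⟨y, hy, ?_, ?_⟩
  · intro n hn
    have hjlt : k - n < (lastWord u k ++ [σ]).length := by rw [hlen]; omega
    have := hyw ⟨k - n, hjlt⟩
    rw [List.get_eq_getElem] at this
    simp only at this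
    rw [List.getElem_append_left (by rw [lastWord_length]; omega : k - n < (lastWord u k).length),
      lastWord_getElem] at this
    have hcast : -(k : ℤ) + (((k - n : ℕ)) : ℤ) = -(n : ℤ) := by
      push_cast [Nat.cast_sub hn]; ring
    rw [hcast] at this
    rw [this]
    congr 1
    omega
  · have hjlt : k + 1 < (lastWord u k ++ [σ]).length := by rw [hlen]; omega
    have := hyw ⟨k + 1, hjlt⟩
    rw [List.get_eq_getElem] at this
    simp only at this
    rw [List.getElem_concat_length (lastWord_length u k).symm] at this
    have hcast : -(k : ℤ) + (((k + 1 : ℕ)) : ℤ) = 1 := by push_cast; ring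
    rwa [hcast] at this

lemma gamma_of_forall [Finite A] [TopologicalSpace A] [DiscreteTopology A] {X : Set (ℤ → A)} (hcl : IsClosed X) {u : ℕ → A} {σ : A}
    (h : ∀ k : ℕ, ∃ y ∈ X, (∀ n ≤ k, y (-(n : ℤ)) = u n) ∧ y 1 = σ) :
    σ ∈ Gamma1 X u := by
  set C : ℕ → Set (ℤ → A) :=
    fun k => X ∩ (⋂ n ∈ Set.Iic k, {y : ℤ → A | y (-(n : ℤ)) = u n}) ∩ {y : ℤ → A | y 1 = σ}
    with hC
  have hCclosed : ∀ k, IsClosed (C k) := by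
    intro k
    refine IsClosed.inter (IsClosed.inter hcl ?_) ?_
    · refine isClosed_biInter fun n _ => ?_
      exact isClosed_eq (continuous_apply _) continuous_const
    · exact isClosed_eq (continuous_apply _) continuous_const
  have hCne : ∀ k, (C k).Nonempty := by
    intro k
    obtain ⟨y, hy, h1, h2⟩ := h k
    exact ⟨y, ⟨hy, by simpa using fun n hn => h1 n hn⟩, h2⟩
  have hCanti : Antitone C := by
    intro a b hab
    refine Set.inter_subset_inter (Set.inter_subset_inter le_rfl ?_) le_rfl
    exact Set.biInter_mono (Set.Iic_subset_Iic.2 hab) (fun n _ => le_rfl)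
  have hne : (⋂ k, C k).Nonempty := by
    refine IsCompact.nonempty_iInter_of_directed_nonempty_isCompact_isClosed C
      hCanti.directed_ge hCne (fun k => (hCclosed k).isCompact) hCclosed
  obtain ⟨y, hy⟩ := hne
  simp only [Set.mem_iInter] at hy
  have hyX : y ∈ X := ((hy 0).1).1
  refine ⟨y, hyX, fun n => ?_, (hy 0).2⟩
  have := ((hy n).1).2
  simp only [Set.mem_iInter] at this
  exact this n (Set.mem_Iic.2 le_rfl)

end Aux4
/-- Proposition 3.1.  A subshift presented by a compact, transition
complete, in-complete and contractive set `M` of probability measures has a g-function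
given by `g (x⁻,σ) = lim_k τ_{(x_{-k},…,x_0)}(μ_k)(C(σ))` for any choices
`μ_k ∈ M` with `μ_k(C((x_{-k},…,x_0))) > 0`; in particular it has property g. -/
theorem stmt7 {A : Type*} [Fintype A] [Nonempty A] [TopologicalSpace A] [DiscreteTopology A]
    (X : Set (ℤ → A)) (hX : IsSubshift X)
    (M : Set (List A → ℝ)) (hMmeas : ∀ μ ∈ M, IsCylMeasure μ)
    (hcomp : IsCompact M) (htc : TransitionComplete M) (hic : InComplete M)
    (hpres : Presents M X) (hcontr : Contractive M X) :
    ∃ g : (ℕ → A) → A → ℝ, IsGFunction X g ∧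
      (∀ u ∈ Xminus X, ∀ σ ∈ Gamma1 X u, ∀ μs : ℕ → (List A → ℝ),
        (∀ k : ℕ, μs k ∈ M ∧ 0 < μs k (lastWord u k)) →
        Filter.Tendsto (fun k => tauWord (lastWord u k) (μs k) [σ])
          Filter.atTop (nhds (g u σ))) ∧
      PropertyG X := by
  classical
  obtain ⟨hXne, hXcl, hXinv⟩ := hX
  have hXinv' : shiftMap '' X = X := hXinv
  -- choice of measures witnessing admissibility of the last words
  have hμex : ∀ u, u ∈ Xminus X → ∀ k : ℕ, ∃ μ, μ ∈ M ∧ 0 < μ (lastWord u k) := by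
    intro u hu k
    obtain ⟨μ, hμ, hpos⟩ := (hpres (lastWord u k)).1 (admissible_lastWord hu k)
    exact ⟨μ, hμ, hpos⟩
  choose! μseq hμseqM hμseqpos using hμex
  -- the defining sequences
  have hFrange : ∀ u, u ∈ Xminus X → ∀ (σ : A) (k : ℕ),
      tauWord (lastWord u k) (μseq u k) [σ] ∈ Set.Icc (0:ℝ) 1 := by
    intro u hu σ k
    have hcyl := hMmeas _ (hμseqM u hu k)
    exact ⟨tau_nonneg hcyl _ _, tau_le_one hcyl _ _ (hμseqpos u hu k)⟩
  -- existence of the limits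
  have hex : ∀ u, u ∈ Xminus X → ∀ σ : A,
      ∃ L, Tendsto (fun k => tauWord (lastWord u k) (μseq u k) [σ]) atTop (𝓝 L) := by
    intro u hu σ
    apply cauchySeq_tendsto_of_complete
    rw [Metric.cauchySeq_iff]
    intro ε hε
    obtain ⟨K, hK⟩ := hcontr u hu [σ] (ε/2) (by positivity)
    refine ⟨K, fun m hm n hn => ?_⟩
    obtain ⟨ν₁, hν₁, hp₁, he₁⟩ :=
      tau_peel M hMmeas htc u K m hm (μseq u m) (hμseqM u hu m) (hμseqpos u hu m)
    obtain ⟨ν₂, hν₂, hp₂, he₂⟩ :=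
      tau_peel M hMmeas htc u K n hn (μseq u n) (hμseqM u hu n) (hμseqpos u hu n)
    rw [Real.dist_eq, he₁ [σ], he₂ [σ]]
    exact lt_of_le_of_lt (hK K le_rfl ν₁ hν₁ ν₂ hν₂ hp₁ hp₂) (by linarith)
  choose! g hgt using hex
  -- convergence for arbitrary admissible choices of measures
  have hgen : ∀ u, u ∈ Xminus X → ∀ σ : A, ∀ μs : ℕ → (List A → ℝ),
      (∀ k, μs k ∈ M ∧ 0 < μs k (lastWord u k)) →
      Tendsto (fun k => tauWord (lastWord u k) (μs k) [σ]) atTop (𝓝 (g u σ)) := by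
    intro u hu σ μs hμs
    rw [Metric.tendsto_atTop]
    intro ε hε
    obtain ⟨K, hK⟩ := hcontr u hu [σ] (ε/3) (by positivity)
    obtain ⟨N, hN⟩ := Metric.tendsto_atTop.1 (hgt u hu σ) (ε/3) (by positivity)
    refine ⟨max K N, fun k hk => ?_⟩
    have h1 : dist (tauWord (lastWord u k) (μs k) [σ])
        (tauWord (lastWord u k) (μseq u k) [σ]) ≤ ε/3 := by
      rw [Real.dist_eq]
      exact hK k (le_trans (le_max_left _ _) hk) (μs k) (hμs k).1 (μseq u k)
        (hμseqM u hu k) (hμs k).2 (hμseqpos u hu k)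
    have h2 := hN k (le_trans (le_max_right _ _) hk)
    calc dist (tauWord (lastWord u k) (μs k) [σ]) (g u σ)
        ≤ dist (tauWord (lastWord u k) (μs k) [σ])
            (tauWord (lastWord u k) (μseq u k) [σ])
          + dist (tauWord (lastWord u k) (μseq u k) [σ]) (g u σ) := dist_triangle _ _ _
      _ < ε := by linarith
  -- vanishing outside Γ₁⁺
  have hIcc : ∀ u, u ∈ Xminus X → ∀ σ : A, g u σ ∈ Set.Icc (0:ℝ) 1 := by
    intro u hu σ
    constructor
    · exact ge_of_tendsto' (hgt u hu σ) (fun k => (hFrange u hu σ k).1)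
    · exact le_of_tendsto' (hgt u hu σ) (fun k => (hFrange u hu σ k).2)
  have hzero : ∀ u, u ∈ Xminus X → ∀ σ : A, σ ∉ Gamma1 X u → g u σ = 0 := by
    intro u hu σ hσ
    by_contra hne
    have hpos : 0 < g u σ := lt_of_le_of_ne (hIcc u hu σ).1 (Ne.symm hne)
    have hev : ∀ᶠ k in atTop, g u σ / 2 < tauWord (lastWord u k) (μseq u k) [σ] :=
      (hgt u hu σ).eventually (eventually_gt_nhds (by linarith))
    obtain ⟨N, hN⟩ := Filter.eventually_atTop.1 hev
    apply hσ
    apply gamma_of_forall hXcl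
    intro k
    set m := max k N with hm
    have hFm : 0 < tauWord (lastWord u m) (μseq u m) [σ] :=
      lt_trans (by linarith) (hN m (le_max_right _ _))
    have hnum : 0 < μseq u m (lastWord u m ++ [σ]) := by
      have hden := hμseqpos u hu m
      have := mul_pos hFm hden
      rwa [tauWord, div_mul_cancel₀ _ hden.ne'] at this
    have hadm : Admissible X (lastWord u m ++ [σ]) :=
      (hpres _).2 ⟨μseq u m, hμseqM u hu m, hnum⟩
    obtain ⟨y, hy, h1, h2⟩ := point_of_admissible_concat hXinv' hadm
    exact ⟨y, hy, fun n hn => h1 n (le_trans hn (le_max_left _ _)), h2⟩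
  -- total mass one
  have hsum : ∀ u, u ∈ Xminus X → ∑ σ : A, g u σ = 1 := by
    intro u hu
    have h1 : Tendsto (fun k => ∑ σ : A, tauWord (lastWord u k) (μseq u k) [σ])
        atTop (𝓝 (∑ σ : A, g u σ)) :=
      tendsto_finset_sum _ (fun σ _ => hgt u hu σ)
    have h2 : (fun k => ∑ σ : A, tauWord (lastWord u k) (μseq u k) [σ])
        = fun _ => (1:ℝ) := by
      funext k
      exact tau_sum_one (hMmeas _ (hμseqM u hu k)) _ (hμseqpos u hu k)
    rw [h2] at h1
    exact tendsto_nhds_unique h1 tendsto_const_nhds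
  -- the contraction estimate for two rays with a common last word
  have hgap : ∀ u u' : ℕ → A, u ∈ Xminus X → u' ∈ Xminus X → ∀ (σ : A) (K : ℕ) (ε : ℝ),
      lastWord u' K = lastWord u K →
      (∀ μ ∈ M, ∀ ν ∈ M, 0 < μ (lastWord u K) → 0 < ν (lastWord u K) →
        |tauWord (lastWord u K) μ [σ] - tauWord (lastWord u K) ν [σ]| ≤ ε) →
      |g u σ - g u' σ| ≤ ε := by
    intro u u' hu hu' σ K ε hW hB
    have hev : ∀ᶠ k in atTop, |tauWord (lastWord u k) (μseq u k) [σ]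
        - tauWord (lastWord u' k) (μseq u' k) [σ]| ≤ ε := by
      rw [Filter.eventually_atTop]
      refine ⟨K, fun k hk => ?_⟩
      obtain ⟨ν₁, hν₁, hp₁, he₁⟩ :=
        tau_peel M hMmeas htc u K k hk (μseq u k) (hμseqM u hu k) (hμseqpos u hu k)
      obtain ⟨ν₂, hν₂, hp₂, he₂⟩ :=
        tau_peel M hMmeas htc u' K k hk (μseq u' k) (hμseqM u' hu' k) (hμseqpos u' hu' k)
      rw [he₁ [σ], he₂ [σ], hW]
      rw [hW] at hp₂
      exact hB ν₁ hν₁ ν₂ hν₂ hp₁ hp₂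
    have htt : Tendsto (fun k => |tauWord (lastWord u k) (μseq u k) [σ]
        - tauWord (lastWord u' k) (μseq u' k) [σ]|) atTop (𝓝 |g u σ - g u' σ|) :=
      ((hgt u hu σ).sub (hgt u' hu' σ)).abs
    exact le_of_tendsto htt hev
  refine ⟨g, ⟨?_, ?_, ?_⟩, ?_, ?_⟩
  · -- continuity
    intro p hp
    obtain ⟨u, σ⟩ := p
    obtain ⟨hu, hσ⟩ := hp
    show Tendsto (fun p : (ℕ → A) × A => g p.1 p.2)
      (𝓝[{p : (ℕ → A) × A | p.1 ∈ Xminus X ∧ p.2 ∈ Gamma1 X p.1}] (u, σ)) (𝓝 (g u σ))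
    rw [Metric.tendsto_nhds]
    intro ε hε
    obtain ⟨K, hK⟩ := hcontr u hu [σ] (ε/2) (by positivity)
    have h1 : ∀ᶠ v : ℕ → A in 𝓝 u, ∀ n ∈ Finset.range (K+1), v n = u n := by
      rw [Filter.eventually_all_finset]
      intro n _
      exact (continuous_apply n).tendsto u (mem_nhds_discrete.2 (Set.mem_singleton (u n)))
    have h2 : ∀ᶠ a : A in 𝓝 σ, a = σ := mem_nhds_discrete.2 rfl
    have hprod : ∀ᶠ p' : (ℕ → A) × A in 𝓝 (u, σ),
        (∀ n ∈ Finset.range (K+1), p'.1 n = u n) ∧ p'.2 = σ := by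
      rw [nhds_prod_eq]
      exact h1.prod_mk h2
    filter_upwards [eventually_nhdsWithin_of_eventually_nhds hprod, self_mem_nhdsWithin]
      with p' hp' hp'S
    obtain ⟨hagree, hpσ⟩ := hp'
    obtain ⟨hu', _⟩ := hp'S
    have hW : lastWord p'.1 K = lastWord u K :=
      lastWord_congr (fun m hm => hagree m (Finset.mem_range.2 (by omega)))
    have hg2 := hgap u p'.1 hu hu' σ K (ε/2) hW (hK K le_rfl)
    rw [hpσ, Real.dist_eq]
    calc |g p'.1 σ - g u σ| = |g u σ - g p'.1 σ| := abs_sub_comm _ _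
      _ ≤ ε/2 := hg2
      _ < ε := by linarith
  · -- values in [0,1]
    intro u hu σ _
    exact hIcc u hu σ
  · -- normalization
    intro u hu
    have : ∀ σ : A, (Gamma1 X u).indicator (g u) σ = g u σ := by
      intro σ
      by_cases h : σ ∈ Gamma1 X u
      · exact Set.indicator_of_mem h _
      · rw [Set.indicator_of_notMem h, hzero u hu σ h]
    rw [Finset.sum_congr rfl (fun σ _ => this σ)]
    exact hsum u hu
  · -- convergence statement
    intro u hu σ _ μs hμs
    exact hgen u hu σ μs hμs
  · -- property g
    intro u hu
    have hex1 : ∃ σ : A, 0 < g u σ := by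
      by_contra h
      push_neg at h
      have : ∑ σ : A, g u σ ≤ 0 := Finset.sum_nonpos (fun σ _ => h σ)
      rw [hsum u hu] at this
      linarith
    obtain ⟨σ, hσpos⟩ := hex1
    obtain ⟨K, hK⟩ := hcontr u hu [σ] (g u σ / 2) (by positivity)
    refine ⟨σ, Set.mem_iUnion.2 ⟨K, ?_⟩⟩
    intro x hx hEnds
    set u' : ℕ → A := fun n => x (-(n:ℤ)) with hu'def
    have hu' : u' ∈ Xminus X := ⟨x, hx, fun n => rfl⟩
    have hW : lastWord u' K = lastWord u K := by
      apply lastWord_congr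
      intro m hm
      have hjlt : K - m < (lastWord u K).length := by rw [lastWord_length]; omega
      have h1 := hEnds ⟨K - m, hjlt⟩
      rw [List.get_eq_getElem] at h1
      simp only at h1
      rw [lastWord_getElem] at h1
      have hlen : (((lastWord u K).length : ℤ)) = (K : ℤ) + 1 := by
        rw [lastWord_length]; push_cast; ring
      rw [hlen] at h1
      have hcast : (((K - m : ℕ)) : ℤ) - ((K:ℤ) + 1 - 1) = -(m:ℤ) := by
        push_cast [Nat.cast_sub hm]; ring
      rw [hcast] at h1
      have hKm : K - (K - m) = m := by omega
      rw [hKm] at h1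
      exact h1
    have hgap' := hgap u u' hu hu' σ K (g u σ / 2) hW (hK K le_rfl)
    have hpos' : 0 < g u' σ := by
      have h1 : g u σ - g u' σ ≤ g u σ / 2 := le_trans (le_abs_self _) hgap'
      linarith
    have hσΓ : σ ∈ Gamma1 X u' := by
      by_contra hns
      rw [hzero u' hu' σ hns] at hpos'
      exact lt_irrefl _ hpos'
    obtain ⟨x'', hx'', hpast, hx1⟩ := hσΓ
    refine ⟨x'', hx'', ?_, ?_⟩
    · intro i hi
      have h1 := hpast ((-i).toNat)
      have hcast : ((((-i).toNat : ℕ)) : ℤ) = -i := Int.toNat_of_nonneg (by omega)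
      rw [hcast] at h1
      rw [neg_neg] at h1
      rw [h1, hu'def]
      simp only
      rw [hcast, neg_neg]
    · intro j
      have hj0 : (j : ℕ) = 0 := by
        have := j.isLt
        simp only [List.length_singleton] at this
        omega
      have : (((j : ℕ) : ℤ)) + 1 = 1 := by rw [hj0]; ring
      rw [this]
      have : [σ].get j = σ := by
        have : j = ⟨0, by simp⟩ := Fin.ext hj0
        rw [this]
        rfl
      rw [this]
      exact hx1
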